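/- Let (a_i) be defined by a_1 = 1 and a_{i+1} = 2^{a_i^2}. Let x = [0; a_1, a_2, …] and q_j the denominators of its convergents. Then (log q_{j+1})/q_j does not converge to 0 as j → ∞; in fact (log q_{j+1})/q_j → ∞. -/

import Mathlib

open Filter Topology Finset

def a10 : ℕ → ℕ
  | 0 => 1
  | 1 => 1
  | (n+2) => 2 ^ (a10 (n+1))^2

def qd (a : ℕ → ℕ) : ℕ → ℕ
  | 0 => 1
  | 1 => a 1
  | (n+2) => a (n+2) * qd a (n+1) + qd a n

lemma a10_pos (n : ℕ) : 1 ≤ a10 n := by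
  match n with
  | 0 => simp [a10]
  | 1 => simp [a10]
  | (n+2) => exact Nat.one_le_two_pow

lemma two_mul_le_two_pow {s : ℕ} (hs : 2 ≤ s) : 2 * s ≤ 2 ^ s := by
  induction s with
  | zero => omega
  | succ n ih =>
    rcases Nat.lt_or_ge n 2 with h | h
    · interval_cases n <;> omega
    · have h1 := ih h
      have h2 : 2 ≤ 2 ^ n := Nat.one_lt_two_pow_iff.mpr (by omega)
      calc 2 * (n+1) = 2 * n + 2 := by ring
        _ ≤ 2 ^ n + 2 ^ n := by omega
        _ = 2 ^ (n+1) := by ring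

lemma a10_le_succ (n : ℕ) : a10 n ≤ a10 (n+1) := by
  match n with
  | 0 => simp [a10]
  | (n+1) =>
    show a10 (n+1) ≤ 2 ^ (a10 (n+1))^2
    have h1 : a10 (n+1) ≤ (a10 (n+1))^2 := Nat.le_self_pow two_ne_zero _
    calc a10 (n+1) ≤ (a10 (n+1))^2 := h1
      _ ≤ 2 ^ (a10 (n+1))^2 := (Nat.lt_two_pow_self (n := _)).le

lemma le_a10 (n : ℕ) : n ≤ a10 n := by
  induction n with
  | zero => omega
  | succ k ih =>
    match k, ih with
    | 0, _ => simp [a10]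
    | (m+1), ih =>
      show m + 2 ≤ 2 ^ (a10 (m+1))^2
      have h1 : a10 (m+1) ≤ (a10 (m+1))^2 := Nat.le_self_pow two_ne_zero _
      have h2 : a10 (m+1) < 2 ^ (a10 (m+1)) := Nat.lt_two_pow_self
      have h3 : (2:ℕ) ^ (a10 (m+1)) ≤ 2 ^ (a10 (m+1))^2 := Nat.pow_le_pow_right (by norm_num) h1
      omega

lemma qd_pos (n : ℕ) : 1 ≤ qd a10 n := by
  match n with
  | 0 => simp [qd]
  | 1 => simp [qd, a10]
  | (n+2) =>
    have := qd_pos n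
    show 1 ≤ a10 (n+2) * qd a10 (n+1) + qd a10 n
    omega

lemma qd_mono (n : ℕ) : qd a10 n ≤ qd a10 (n+1) := by
  match n with
  | 0 => simp [qd, a10]
  | (n+1) =>
    show qd a10 (n+1) ≤ a10 (n+2) * qd a10 (n+1) + qd a10 n
    have h1 := a10_pos (n+2)
    nlinarith [qd_pos (n+1), qd_pos n]

lemma qd_le_a10 (n : ℕ) : qd a10 n ≤ a10 (n+1) := by
  match n with
  | 0 => simp [qd, a10]
  | 1 => simp [qd, a10]
  | (n+2) =>
    have h1 := qd_le_a10 (n+1)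
    have h2 := qd_le_a10 n
    show a10 (n+2) * qd a10 (n+1) + qd a10 n ≤ 2 ^ (a10 (n+2))^2
    set m := a10 (n+2) with hm
    have hmono : a10 (n+1) ≤ m := a10_le_succ (n+1)
    have hm2 : 2 ≤ m := by
      have : 1 ≤ (a10 (n+1))^2 := Nat.one_le_pow _ _ (a10_pos (n+1))
      calc 2 = 2^1 := rfl
        _ ≤ 2 ^ (a10 (n+1))^2 := Nat.pow_le_pow_right (by norm_num) this
    have key : 2 * m^2 ≤ 2 ^ m^2 := two_mul_le_two_pow (by nlinarith)
    have : a10 (n+2) * qd a10 (n+1) + qd a10 n ≤ m * m + m := by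
      have : qd a10 (n+1) ≤ m := h1
      have : qd a10 n ≤ m := le_trans h2 hmono
      nlinarith [qd_le_a10 (n+1)]
    nlinarith
termination_by n

lemma qd_step (n : ℕ) : qd a10 (n+1) ≤ 2 * a10 (n+1) * qd a10 n := by
  match n with
  | 0 => simp [qd, a10]
  | (n+1) =>
    show a10 (n+2) * qd a10 (n+1) + qd a10 n ≤ 2 * a10 (n+2) * qd a10 (n+1)
    have h1 := qd_mono n
    have h2 := a10_pos (n+2)
    nlinarith [qd_pos (n+1)]

lemma four_cube_le {m : ℕ} (hm : 4 ≤ m) : 4 * m^3 ≤ 2 ^ m^2 := by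
  have h1 : m ≤ 2 ^ m := (Nat.lt_two_pow_self (n := m)).le
  have h2 : m^3 ≤ (2^m)^3 := Nat.pow_le_pow_left h1 3
  have h3 : 4 * m^3 ≤ 2 ^ (3*m+2) := by
    calc 4 * m^3 ≤ 4 * (2^m)^3 := by omega
      _ = 2 ^ (3*m+2) := by rw [← pow_mul]; ring
  have h4 : 3*m+2 ≤ m^2 := by nlinarith
  exact le_trans h3 (Nat.pow_le_pow_right (by norm_num) h4)

/-- main nat inequality -/
lemma key_nat (n : ℕ) (h : 4 ≤ a10 (n+1)) :
    a10 (n+1) * qd a10 (n+2) ≤ (a10 (n+2))^2 := by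
  set m := a10 (n+1) with hm
  have hq2 : qd a10 (n+2) ≤ 2 * a10 (n+2) * qd a10 (n+1) := qd_step (n+1)
  have hq1 : qd a10 (n+1) ≤ 2 * m * qd a10 n := qd_step n
  have hq0 : qd a10 n ≤ m := qd_le_a10 n
  have hbound : qd a10 (n+2) ≤ 4 * a10 (n+2) * m^2 := by
    calc qd a10 (n+2) ≤ 2 * a10 (n+2) * qd a10 (n+1) := hq2
      _ ≤ 2 * a10 (n+2) * (2 * m * qd a10 n) := Nat.mul_le_mul_left _ hq1
      _ ≤ 2 * a10 (n+2) * (2 * m * m) :=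
          Nat.mul_le_mul_left _ (Nat.mul_le_mul_left _ hq0)
      _ = 4 * a10 (n+2) * m^2 := by ring
  have ha : a10 (n+2) = 2 ^ m^2 := rfl
  have h4 : 4 * m^3 ≤ a10 (n+2) := by rw [ha]; exact four_cube_le h
  nlinarith [a10_pos (n+2)]

lemma key_real (n : ℕ) (h : 4 ≤ a10 (n+1)) :
    Real.log 2 * (a10 (n+1) : ℝ) ≤ Real.log (qd a10 (n+3)) / (qd a10 (n+2) : ℝ) := by
  have hq2 : (0:ℝ) < (qd a10 (n+2) : ℝ) := by exact_mod_cast qd_pos (n+2)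
  rw [le_div_iff₀ hq2]
  have hlog2 : (0:ℝ) ≤ Real.log 2 := Real.log_nonneg one_le_two
  -- qd (n+3) ≥ a10 (n+3) = 2 ^ (a10(n+2))^2
  have h1 : a10 (n+3) ≤ qd a10 (n+3) := by
    show a10 (n+3) ≤ a10 (n+3) * qd a10 (n+2) + qd a10 (n+1)
    nlinarith [qd_pos (n+2), qd_pos (n+1), a10_pos (n+3)]
  have ha : a10 (n+3) = 2 ^ (a10 (n+2))^2 := rfl
  have h2 : ((a10 (n+2))^2 : ℝ) * Real.log 2 ≤ Real.log (qd a10 (n+3)) := by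
    have := Real.log_le_log (Nat.cast_pos.mpr (a10_pos _)) (by exact_mod_cast h1 : ((a10 (n+3)):ℝ) ≤ (qd a10 (n+3) : ℝ))
    calc ((a10 (n+2))^2 : ℝ) * Real.log 2 = Real.log ((2:ℝ) ^ (a10 (n+2))^2) := by
          rw [Real.log_pow]; push_cast; ring
      _ = Real.log (a10 (n+3)) := by rw [ha]; norm_num
      _ ≤ _ := this
  have hnat := key_nat n h
  have h3 : Real.log 2 * (a10 (n+1) : ℝ) * (qd a10 (n+2) : ℝ) ≤ ((a10 (n+2))^2 : ℝ) * Real.log 2 := by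
    have : ((a10 (n+1) : ℝ)) * (qd a10 (n+2) : ℝ) ≤ ((a10 (n+2))^2 : ℝ) := by
      exact_mod_cast hnat
    nlinarith
  linarith

/-- For `a_1 = 1`, `a_{i+1} = 2^{a_i^2}`, the ratio `log q_{j+1}/q_j` does not tend to `0`;
in fact it tends to `∞`. -/
theorem stmt10 :
    ¬ Tendsto (fun j : ℕ => Real.log (qd a10 (j+1)) / (qd a10 j : ℝ)) atTop (nhds 0) ∧
      Tendsto (fun j : ℕ => Real.log (qd a10 (j+1)) / (qd a10 j : ℝ)) atTop atTop := by
  have htop : Tendsto (fun j : ℕ => Real.log (qd a10 (j+1)) / (qd a10 j : ℝ)) atTop atTop := by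
    rw [← tendsto_add_atTop_iff_nat 5]
    have hgoal : Tendsto (fun n : ℕ => Real.log 2 * ((n:ℝ) + 4)) atTop atTop := by
      have h2 : Tendsto (fun n : ℕ => ((n:ℝ) + 4)) atTop atTop :=
        tendsto_atTop_add_const_right _ _ tendsto_natCast_atTop_atTop
      exact h2.const_mul_atTop (Real.log_pos one_lt_two)
    apply tendsto_atTop_mono _ hgoal
    intro n
    have hm : 4 ≤ a10 (n+4) := le_trans (by omega) (le_a10 (n+4))
    have := key_real (n+3) hm
    have hcast : ((n:ℝ) + 4) ≤ (a10 (n+4) : ℝ) := by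
      have := le_a10 (n+4)
      exact_mod_cast this
    calc Real.log 2 * ((n:ℝ) + 4) ≤ Real.log 2 * (a10 (n+4) : ℝ) := by
          have hlog2 : (0:ℝ) ≤ Real.log 2 := Real.log_nonneg one_le_two
          nlinarith
      _ ≤ _ := this
  exact ⟨not_tendsto_nhds_of_tendsto_atTop htop 0, htop⟩
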